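/- For every integer a > 1, Σ_{t=1}^{a-1} (-1)^t τ(a,t) = μ(a), where μ is the Möbius function. -/

import Mathlib

open Finset

/-- `τ(a, t)`: the number of `t`-tuples `(a_1, ..., a_t)` of integers with every `a_j ≥ 2`
and `a_1 * a_2 * ⋯ * a_t = a`. (Every such entry is at most `a` when the product is `a`.) -/
def tauCount (a t : ℕ) : ℕ :=
  ((Fintype.piFinset (fun _ : Fin t => Finset.range (a + 1))).filter
    (fun f => (∀ j, 2 ≤ f j) ∧ ∏ j, f j = a)).card

lemma tauCount_eq_zero (a t : ℕ) (h : a ≤ t) : tauCount a t = 0 := by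
  rw [tauCount, Finset.card_eq_zero, Finset.filter_eq_empty_iff]
  rintro f _ ⟨h2, hprod⟩
  have h1 : (2 : ℕ) ^ t ≤ a := by
    calc (2 : ℕ) ^ t = ∏ _j : Fin t, 2 := by simp
    _ ≤ ∏ j, f j := Finset.prod_le_prod' fun j _ => h2 j
    _ = a := hprod
  have := @Nat.lt_two_pow_self t
  omega

lemma tauCount_succ (a t : ℕ) (ha : 1 ≤ a) :
    tauCount a (t + 1) =
      ∑ d ∈ a.divisors.filter (fun d => 2 ≤ d), tauCount (a / d) t := by
  classical
  have ha0 : a ≠ 0 := by omega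
  rw [tauCount]
  rw [Finset.card_eq_sum_card_fiberwise
    (f := fun f : Fin (t + 1) → ℕ => f 0)
    (t := a.divisors.filter (fun d => 2 ≤ d)) ?_]
  · apply Finset.sum_congr rfl
    intro d hd
    rw [Finset.mem_filter, Nat.mem_divisors] at hd
    obtain ⟨⟨hdvd, _⟩, hd2⟩ := hd
    have hd0 : d ≠ 0 := by omega
    have hq : 1 ≤ a / d := Nat.one_le_div_iff (by omega) |>.mpr (Nat.le_of_dvd (by omega) hdvd)
    rw [tauCount]
    refine Finset.card_bij' (fun f _ => Fin.tail f) (fun g _ => Fin.cons d g) ?_ ?_ ?_ ?_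
    · -- forward membership
      intro f hf
      simp only [Finset.mem_filter, Fintype.mem_piFinset, Finset.mem_range] at hf ⊢
      obtain ⟨⟨hmem, h2, hprod⟩, hf0⟩ := hf
      have hprodtail : ∏ j, Fin.tail f j = a / d := by
        have h : d * ∏ j, Fin.tail f j = a := by
          rw [← hprod, Fin.prod_univ_succ, hf0]; rfl
        exact (Nat.div_eq_of_eq_mul_right (by omega) h.symm).symm
      refine ⟨fun i => ?_, fun j => h2 j.succ, hprodtail⟩
      have : Fin.tail f i ∣ a / d := hprodtail ▸ Finset.dvd_prod_of_mem _ (Finset.mem_univ i)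
      have := Nat.le_of_dvd (by omega) this
      omega
    · -- backward membership
      intro g hg
      simp only [Finset.mem_filter, Fintype.mem_piFinset, Finset.mem_range] at hg ⊢
      obtain ⟨hmem, h2, hprod⟩ := hg
      have hda : d ≤ a := Nat.le_of_dvd (by omega) hdvd
      have hdiv_le : a / d ≤ a := Nat.div_le_self a d
      refine ⟨⟨fun i => ?_, fun j => ?_, ?_⟩, by simp⟩
      · rcases Fin.eq_zero_or_eq_succ i with h0 | ⟨j, rfl⟩
        · subst h0; simpa using by omega
        · rw [Fin.cons_succ]; have := hmem j; omega
      · rcases Fin.eq_zero_or_eq_succ j with h0 | ⟨j', rfl⟩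
        · subst h0; simpa using hd2
        · rw [Fin.cons_succ]; exact h2 j'
      · rw [Fin.prod_univ_succ, Fin.cons_zero]
        simp only [Fin.cons_succ]
        rw [hprod, Nat.mul_div_cancel' hdvd]
    · intro f hf
      simp only [Finset.mem_filter] at hf
      show Fin.cons d (Fin.tail f) = f
      rw [← hf.2]
      exact Fin.cons_self_tail f
    · intro g _
      simp [Fin.tail_cons]
  · intro f hf
    simp only [Finset.mem_coe, Finset.mem_filter, Fintype.mem_piFinset, Finset.mem_range] at hf
    obtain ⟨_, h2, hprod⟩ := hf
    rw [Finset.mem_coe, Finset.mem_filter, Nat.mem_divisors]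
    refine ⟨⟨?_, ha0⟩, h2 0⟩
    rw [← hprod, Fin.prod_univ_succ]
    exact Dvd.intro _ rfl

lemma sum_moebius_divisors (n : ℕ) :
    ∑ d ∈ n.divisors, ArithmeticFunction.moebius d = if n = 1 then 1 else 0 := by
  rw [← ArithmeticFunction.coe_mul_zeta_apply, ArithmeticFunction.moebius_mul_coe_zeta,
    ArithmeticFunction.one_apply]

lemma key_sum (a : ℕ) (ha : 1 ≤ a) :
    ∑ t ∈ Finset.range a, (-1 : ℤ) ^ t * tauCount a t =
      ArithmeticFunction.moebius a := by
  induction a using Nat.strong_induction_on with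
  | _ a ih =>
  rcases eq_or_lt_of_le ha with h1 | h2
  · -- a = 1
    have : a = 1 := h1.symm
    subst this
    simp [tauCount]
  · -- a ≥ 2
    have ha0 : a ≠ 0 := by omega
    have ha1 : a ≠ 1 := by omega
    obtain ⟨b, rfl⟩ : ∃ b, a = b + 1 := ⟨a - 1, by omega⟩
    rw [Finset.sum_range_succ']
    have h0 : tauCount (b + 1) 0 = 0 := by
      rw [tauCount, Finset.card_eq_zero, Finset.filter_eq_empty_iff]
      rintro f _ ⟨_, hprod⟩
      simp at hprod
      omega
    rw [h0]
    have hrec : ∀ t, ((tauCount (b + 1) (t + 1) : ℤ)) =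
        ∑ d ∈ (b + 1).divisors.filter (fun d => 2 ≤ d), (tauCount ((b + 1) / d) t : ℤ) := by
      intro t
      rw [tauCount_succ (b + 1) t (by omega)]
      push_cast
      rfl
    simp only [hrec, Finset.mul_sum]
    rw [Finset.sum_comm]
    have hinner : ∀ d ∈ (b + 1).divisors.filter (fun d => 2 ≤ d),
        ∑ t ∈ Finset.range b, (-1 : ℤ) ^ (t + 1) * tauCount ((b + 1) / d) t =
        - ArithmeticFunction.moebius ((b + 1) / d) := by
      intro d hd
      rw [Finset.mem_filter, Nat.mem_divisors] at hd
      obtain ⟨⟨hdvd, _⟩, hd2⟩ := hd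
      have hq1 : 1 ≤ (b + 1) / d := Nat.one_le_div_iff (by omega) |>.mpr
        (Nat.le_of_dvd (by omega) hdvd)
      have hqb : (b + 1) / d ≤ b := by
        have := Nat.div_le_div_right (c := 2) (Nat.le_of_dvd (by omega) hdvd)
        have h2d : (b + 1) / d ≤ (b + 1) / 2 := Nat.div_le_div_left hd2 (by omega)
        omega
      have hext : ∑ t ∈ Finset.range b, (-1 : ℤ) ^ t * tauCount ((b + 1) / d) t =
          ∑ t ∈ Finset.range ((b + 1) / d), (-1 : ℤ) ^ t * tauCount ((b + 1) / d) t := by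
        symm
        apply Finset.sum_subset
        · exact Finset.range_subset_range.mpr hqb
        · intro t _ ht
          rw [Finset.mem_range, not_lt] at ht
          rw [tauCount_eq_zero _ _ ht]
          ring
      have := ih ((b + 1) / d) (Nat.div_lt_self (by omega) (by omega)) hq1
      calc ∑ t ∈ Finset.range b, (-1 : ℤ) ^ (t + 1) * tauCount ((b + 1) / d) t
          = - ∑ t ∈ Finset.range b, (-1 : ℤ) ^ t * tauCount ((b + 1) / d) t := by
            rw [← Finset.sum_neg_distrib]
            apply Finset.sum_congr rfl
            intro t _
            ring
        _ = - ArithmeticFunction.moebius ((b + 1) / d) := by rw [hext, this]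
    rw [Finset.sum_congr rfl hinner]
    -- now: ∑ d in filter, -μ((b+1)/d) + 0 = μ (b+1)
    have hbij : ∑ d ∈ (b + 1).divisors.filter (fun d => 2 ≤ d),
        (ArithmeticFunction.moebius ((b + 1) / d) : ℤ) =
        ∑ e ∈ (b + 1).properDivisors, (ArithmeticFunction.moebius e : ℤ) := by
      apply Finset.sum_nbij' (i := fun d => (b + 1) / d) (j := fun e => (b + 1) / e)
      · intro d hd
        rw [Finset.mem_filter, Nat.mem_divisors] at hd
        obtain ⟨⟨hdvd, _⟩, hd2⟩ := hd
        rw [Nat.mem_properDivisors]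
        exact ⟨Nat.div_dvd_of_dvd hdvd, Nat.div_lt_self (by omega) (by omega)⟩
      · intro e he
        rw [Nat.mem_properDivisors] at he
        obtain ⟨hdvd, hlt⟩ := he
        have he0 : e ≠ 0 := by
          rintro rfl; simp at hdvd
        rw [Finset.mem_filter, Nat.mem_divisors]
        refine ⟨⟨Nat.div_dvd_of_dvd hdvd, by omega⟩, ?_⟩
        obtain ⟨c, hc⟩ := hdvd
        have hc2 : 2 ≤ c := by
          rcases c with _ | _ | c
          · omega
          · omega
          · omega
        have hce : (b + 1) / e = c := by
          rw [hc, Nat.mul_div_cancel_left _ (by omega : 0 < e)]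
        omega
      · intro d hd
        rw [Finset.mem_filter, Nat.mem_divisors] at hd
        exact Nat.div_div_self hd.1.1 (by omega)
      · intro e he
        rw [Nat.mem_properDivisors] at he
        exact Nat.div_div_self he.1 (by omega)
      · intro d _
        rfl
    rw [Finset.sum_neg_distrib, hbij]
    have hsplit : (b + 1).divisors = insert (b + 1) (b + 1).properDivisors := by
      rw [Nat.insert_self_properDivisors (by omega)]
    have hsum := sum_moebius_divisors (b + 1)
    rw [if_neg ha1, hsplit, Finset.sum_insert Nat.self_notMem_properDivisors] at hsum
    simp only [pow_zero, Nat.cast_zero, mul_zero, one_mul, add_zero]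
    linarith [hsum]
/-- for every integer `a > 1`,
`∑_{t=1}^{a-1} (-1)^t τ(a, t) = μ(a)`. -/
theorem alt_sum_tau (a : ℕ) (ha : 1 < a) :
    ∑ t ∈ Finset.Icc 1 (a - 1), (-1 : ℤ) ^ t * tauCount a t =
      ArithmeticFunction.moebius a := by
  rw [← key_sum a (by omega)]
  apply Finset.sum_subset
  · intro t ht
    rw [Finset.mem_Icc] at ht
    rw [Finset.mem_range]
    omega
  · intro t htr hti
    rw [Finset.mem_range] at htr
    rw [Finset.mem_Icc] at hti
    have ht0 : t = 0 := by omega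
    subst ht0
    have h0 : tauCount a 0 = 0 := by
      rw [tauCount, Finset.card_eq_zero, Finset.filter_eq_empty_iff]
      rintro f _ ⟨_, hp⟩
      simp at hp
      omega
    simp [h0]
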